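/- If G is a profinite group that is topologically finitely generated, then for every n, G has only finitely many open subgroups of index n. -/

import Mathlib

open scoped Pointwise

/-- Conjugating permutations by an equiv, as a monoid hom composed with the action hom. -/
noncomputable def actHom {G : Type*} [Group G] (H : Subgroup G) {n : ℕ}
    (e : G ⧸ H ≃ Fin n) : G →* Equiv.Perm (Fin n) where
  toFun g := e.permCongr (MulAction.toPermHom G (G ⧸ H) g)
  map_one' := by ext x; simp
  map_mul' g h := by ext x; simp [mul_smul]

lemma actHom_apply {G : Type*} [Group G] (H : Subgroup G) {n : ℕ}
    (e : G ⧸ H ≃ Fin n) (g : G) (x : G ⧸ H) :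
    actHom H e g (e x) = e (g • x) := by
  simp [actHom]

lemma open_subgroup_eq_closure_inter {G : Type*} [Group G] [TopologicalSpace G]
    [IsTopologicalGroup G] (H : Subgroup G) (hH : IsOpen (H : Set G))
    (D : Set G) (hD : Dense D) :
    (H : Set G) = closure (D ∩ H) := by
  apply subset_antisymm
  · intro h hh
    rw [mem_closure_iff]
    intro V hV hhV
    obtain ⟨x, hxVH, hxD⟩ := hD.inter_open_nonempty (V ∩ H) (hV.inter hH) ⟨h, hhV, hh⟩
    exact ⟨x, hxVH.1, hxD, hxVH.2⟩
  · calc closure (D ∩ H) ⊆ closure (H : Set G) := closure_mono Set.inter_subset_right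
      _ = (H : Set G) := (H.isClosed_of_isOpen hH).closure_eq

/-- A topologically finitely generated profinite group has only
finitely many open subgroups of any given index `n`. -/
theorem stmt18 (G : Type*) [Group G] [TopologicalSpace G] [IsTopologicalGroup G]
    [CompactSpace G] [T2Space G] [TotallyDisconnectedSpace G]
    (S : Finset G) (hS : Dense ((Subgroup.closure (S : Set G) : Subgroup G) : Set G))
    (n : ℕ) :
    {H : Subgroup G | IsOpen (H : Set G) ∧ H.index = n}.Finite := by
  set D : Subgroup G := Subgroup.closure (S : Set G) with hD
  rcases eq_or_ne n 0 with hn | hn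
  · subst hn
    convert Set.finite_empty
    ext H
    simp only [Set.mem_setOf_eq, Set.mem_empty_iff_false, iff_false, not_and]
    intro hopen hidx
    have : Finite (G ⧸ H) := H.quotient_finite_of_isOpen hopen
    have : H.index ≠ 0 := by
      rw [Subgroup.index_eq_card]
      exact Nat.card_ne_zero.mpr ⟨⟨(1 : G)⟩, this⟩
    exact this hidx
  · rw [← Set.finite_coe_iff]
    set T := {H : Subgroup G | IsOpen (H : Set G) ∧ H.index = n}
    have card_eq : ∀ H : T, Nat.card (G ⧸ (H : Subgroup G)) = n := by
      intro H
      rw [← Subgroup.index_eq_card]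
      exact H.2.2
    let e : ∀ H : T, G ⧸ (H : Subgroup G) ≃ Fin n := fun H =>
      (Nat.equivFinOfCardPos (by rw [card_eq H]; exact hn)).trans (finCongr (card_eq H))
    let f : T → (S → Equiv.Perm (Fin n)) × Fin n := fun H =>
      (fun s => actHom (H : Subgroup G) (e H) s, e H ((1 : G) : G ⧸ (H : Subgroup G)))
    have hf : Function.Injective f := by
      intro H K hHK
      have hfun : ∀ s : S, actHom (H : Subgroup G) (e H) s = actHom (K : Subgroup G) (e K) s :=
        fun s => congrFun (congrArg Prod.fst hHK) s
      have hpt : e H ((1 : G) : G ⧸ (H : Subgroup G)) = e K ((1 : G) : G ⧸ (K : Subgroup G)) :=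
        congrArg Prod.snd hHK
      have heq : ∀ d ∈ D, actHom (H : Subgroup G) (e H) d = actHom (K : Subgroup G) (e K) d := by
        intro d hd
        exact MonoidHom.eqOn_closure (fun s hs => hfun ⟨s, hs⟩) hd
      have hmem : ∀ d ∈ D, (d ∈ (H : Subgroup G) ↔ d ∈ (K : Subgroup G)) := by
        intro d hd
        have h2 : ∀ (L : ↑T), d ∈ (L : Subgroup G) ↔
            actHom (L : Subgroup G) (e L) d (e L ((1 : G) : G ⧸ (L : Subgroup G)))
              = e L ((1 : G) : G ⧸ (L : Subgroup G)) := by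
          intro L
          rw [actHom_apply, Equiv.apply_eq_iff_eq]
          have hsm : (d : G) • ((1 : G) : G ⧸ (L : Subgroup G))
              = ((d : G) : G ⧸ (L : Subgroup G)) := by
            show ((d * 1 : G) : G ⧸ (L : Subgroup G)) = _
            rw [mul_one]
          rw [hsm, QuotientGroup.eq, mul_one, inv_mem_iff]
        rw [h2 H, h2 K, heq d hd, hpt]
      have : (H : Subgroup G) = (K : Subgroup G) := by
        apply SetLike.coe_injective
        have hsets : ((D : Set G) ∩ ((H : Subgroup G) : Set G))
            = ((D : Set G) ∩ ((K : Subgroup G) : Set G)) := by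
          ext x
          exact and_congr_right fun hx => hmem x hx
        rw [open_subgroup_eq_closure_inter _ H.2.1 (D : Set G) hS,
            open_subgroup_eq_closure_inter _ K.2.1 (D : Set G) hS, hsets]
      exact Subtype.ext this
    exact Finite.of_injective f hf
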